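/- arXiv:1208.3589 — 3 statements merged into one kernel-verified Lean document; each statement's English description precedes it below -/
import Mathlib

section
/- Let (m, S, α, ω) be a solution of the EYM field equations on an interval [r₀, r₁) ⊆ (0,∞) with μ(r) > 0 and S(r) > 0 for all r ∈ [r₀, r₁). If α(r₀) ≥ 0 and α'(r₀) > 0, then α'(r) > 0 for all r ∈ [r₀, r₁); in particular the electric gauge field function α is strictly increasing on [r₀, r₁). -/
noncomputable section

open Set Filter

/-- The metric function `μ(r) = 1 - 2 m(r)/r + r²/ℓ²`. -/
def metricMu (ℓ : ℝ) (m : ℝ → ℝ) (r : ℝ) : ℝ :=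
  1 - 2 * m r / r + r ^ 2 / ℓ ^ 2

/-- `(m, S, a, w)` is a solution of the su(2) Einstein–Yang–Mills field equations
(with electric gauge field function `a = α` and magnetic gauge field function `w = ω`)
on the interval `I ⊆ (0, ∞)`. -/
structure IsEYMSolution (ℓ : ℝ) (I : Set ℝ) (m S a w : ℝ → ℝ) : Prop where
  subset_Ioi : I ⊆ Set.Ioi (0 : ℝ)
  ordConnected : I.OrdConnected
  m_C1 : ContDiffOn ℝ 1 m I
  S_C1 : ContDiffOn ℝ 1 S I
  a_C2 : ContDiffOn ℝ 2 a I
  w_C2 : ContDiffOn ℝ 2 w I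
  S_ne_zero : ∀ r ∈ I, S r ≠ 0
  mu_ne_zero : ∀ r ∈ I, metricMu ℓ m r ≠ 0
  eq_m : ∀ r ∈ I, deriv m r =
      r ^ 2 * (deriv a r) ^ 2 / (2 * S r ^ 2)
        + a r ^ 2 * w r ^ 2 / (metricMu ℓ m r * S r ^ 2)
        + metricMu ℓ m r * (deriv w r) ^ 2
        + (w r ^ 2 - 1) ^ 2 / (2 * r ^ 2)
  eq_S : ∀ r ∈ I, deriv S r =
      S r * (2 * a r ^ 2 * w r ^ 2 / (r * metricMu ℓ m r ^ 2 * S r ^ 2)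
        + 2 * (deriv w r) ^ 2 / r)
  eq_a : ∀ r ∈ I, deriv (deriv a) r =
      -2 * deriv a r / r + deriv a r * deriv S r / S r
        + 2 * a r * w r ^ 2 / (r ^ 2 * metricMu ℓ m r)
  eq_w : ∀ r ∈ I, deriv (deriv w) r =
      -(deriv w r) * deriv S r / S r
        - deriv w r * deriv (metricMu ℓ m) r / metricMu ℓ m r
        - a r ^ 2 * w r / (metricMu ℓ m r ^ 2 * S r ^ 2)
        + w r * (w r ^ 2 - 1) / (r ^ 2 * metricMu ℓ m r)

/-- **Monotonicity of the electric gauge field function.**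
If `(m, S, α, ω)` solves the EYM field equations on `[r₀, r₁) ⊆ (0, ∞)` with `μ > 0`
and `S > 0` there, and `α(r₀) ≥ 0`, `α'(r₀) > 0`, then `α'(r) > 0` throughout
`[r₀, r₁)`; in particular `α` is strictly increasing on `[r₀, r₁)`. -/
theorem eym_electric_increasing (ℓ r₀ r₁ : ℝ) (hℓ : 0 < ℓ) (hr₀ : 0 < r₀)
    (hr₀₁ : r₀ < r₁) (m S a w : ℝ → ℝ)
    (hsol : IsEYMSolution ℓ (Set.Ico r₀ r₁) m S a w)
    (hμ : ∀ r ∈ Set.Ico r₀ r₁, 0 < metricMu ℓ m r)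
    (hS : ∀ r ∈ Set.Ico r₀ r₁, 0 < S r)
    (ha : 0 ≤ a r₀) (ha' : 0 < deriv a r₀) :
    (∀ r ∈ Set.Ico r₀ r₁, 0 < deriv a r) ∧ StrictMonoOn a (Set.Ico r₀ r₁) := by
  obtain ⟨hsub, hord, hm1, hS1, ha2, hw2, hSne, hμne, heqm, heqS, heqa, heqw⟩ := hsol
  set I : Set ℝ := Set.Ico r₀ r₁ with hIdef
  have hr₀I : r₀ ∈ I := ⟨le_refl _, hr₀₁⟩
  have huniq : UniqueDiffOn ℝ I := uniqueDiffOn_Ico r₀ r₁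
  -- `deriv a` agrees with `derivWithin a I` on `I`, hence is continuous on `I`.
  have hdiff_r₀ : DifferentiableAt ℝ a r₀ := by
    by_contra h
    rw [deriv_zero_of_not_differentiableAt h] at ha'
    exact lt_irrefl 0 ha'
  have hDW : ∀ x ∈ I, derivWithin a I x = deriv a x := by
    intro x hx
    rcases eq_or_lt_of_le hx.1 with h | h
    · rw [← h]; exact hdiff_r₀.derivWithin (huniq r₀ hr₀I)
    · exact derivWithin_of_mem_nhds (by
        exact mem_nhds_iff.mpr ⟨Ioo r₀ r₁, Ioo_subset_Ico_self, isOpen_Ioo, ⟨h, hx.2⟩⟩)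
  have hcont_da : ContinuousOn (deriv a) I := by
    have h1 : ContinuousOn (derivWithin a I) I :=
      ha2.continuousOn_derivWithin huniq (by norm_num)
    exact h1.congr fun x hx => (hDW x hx).symm
  -- the key derivative computation for g(r) = r² a'(r) / S(r)
  have hg' : ∀ x ∈ Ioo r₀ r₁, HasDerivAt (fun r => r ^ 2 * deriv a r / S r)
      (2 * a x * w x ^ 2 / (metricMu ℓ m x * S x)) x := by
    intro x hx
    have hxI : x ∈ I := Ioo_subset_Ico_self hx
    have hx0 : 0 < x := lt_trans hr₀ hx.1
    have hSx := hSne x hxI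
    have hμx := hμne x hxI
    have hda1 : ContDiffOn ℝ 1 (deriv a) (Ioo r₀ r₁) :=
      (ha2.mono Ioo_subset_Ico_self).deriv_of_isOpen isOpen_Ioo (by norm_num)
    have hda_at : HasDerivAt (deriv a) (deriv (deriv a) x) x :=
      (((hda1.differentiableOn one_ne_zero) x hx).differentiableAt
        (isOpen_Ioo.mem_nhds hx)).hasDerivAt
    have ha_at : HasDerivAt a (deriv a x) x :=
      ((((ha2.mono Ioo_subset_Ico_self).differentiableOn (by norm_num)) x hx).differentiableAt
        (isOpen_Ioo.mem_nhds hx)).hasDerivAt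
    have hS_at : HasDerivAt S (deriv S x) x :=
      ((((hS1.mono Ioo_subset_Ico_self).differentiableOn one_ne_zero) x hx).differentiableAt
        (isOpen_Ioo.mem_nhds hx)).hasDerivAt
    have hA : HasDerivAt (fun r => r ^ 2 * deriv a r)
        (2 * x ^ 1 * deriv a x + x ^ 2 * deriv (deriv a) x) x := by
      simpa using (hasDerivAt_pow 2 x).fun_mul hda_at
    have hgd := hA.fun_div hS_at hSx
    refine hgd.congr_deriv ?_
    rw [heqa x hxI]
    field_simp
    ring
  -- positivity of `deriv a` on all of `I`
  have key : ∀ r ∈ I, 0 < deriv a r := by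
    by_contra hcon
    push_neg at hcon
    obtain ⟨b, hbI, hb⟩ := hcon
    set B : Set ℝ := {r ∈ I | deriv a r ≤ 0} with hBdef
    have hBne : B.Nonempty := ⟨b, hbI, hb⟩
    have hBbdd : BddBelow B := ⟨r₀, fun x hx => hx.1.1⟩
    set t := sInf B with htdef
    have hBsub : B ⊆ I := fun x hx => hx.1
    have htI : t ∈ I := ⟨le_csInf hBne fun x hx => hx.1.1,
      lt_of_le_of_lt (csInf_le hBbdd ⟨hbI, hb⟩) hbI.2⟩
    have htB : deriv a t ≤ 0 := by
      have hcl : t ∈ closure B := csInf_mem_closure hBne hBbdd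
      have hcw : ContinuousWithinAt (deriv a) B t := (hcont_da t htI).mono hBsub
      have hmt : MapsTo (deriv a) B (Iic 0) := fun x hx => hx.2
      have := hcw.mem_closure hcl hmt
      rwa [closure_Iic] at this
    have ht_pos : r₀ < t := htI.1.lt_of_ne (fun h => by rw [← h] at htB; linarith)
    have hpos_lt : ∀ r ∈ Ico r₀ t, 0 < deriv a r := by
      intro r hr
      by_contra h
      push_neg at h
      have hrB : r ∈ B := ⟨⟨hr.1, lt_trans hr.2 htI.2⟩, h⟩
      exact absurd (csInf_le hBbdd hrB) (not_le.mpr hr.2)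
    have hIcc_sub : Icc r₀ t ⊆ I := fun x hx => ⟨hx.1, lt_of_le_of_lt hx.2 htI.2⟩
    -- a is nonnegative on [r₀, t]
    have ha_mono : MonotoneOn a (Icc r₀ t) := by
      refine (strictMonoOn_of_deriv_pos (convex_Icc _ _)
        (ha2.continuousOn.mono hIcc_sub) ?_).monotoneOn
      rw [interior_Icc]
      intro x hx
      exact hpos_lt x ⟨hx.1.le, hx.2⟩
    have ha_nonneg : ∀ x ∈ Icc r₀ t, 0 ≤ a x := fun x hx =>
      le_trans ha (ha_mono (left_mem_Icc.mpr ht_pos.le) hx hx.1)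
    -- g is monotone on [r₀, t]
    have hIoo_sub : Ioo r₀ t ⊆ Ioo r₀ r₁ := Ioo_subset_Ioo le_rfl htI.2.le
    have hg_cont : ContinuousOn (fun r => r ^ 2 * deriv a r / S r) (Icc r₀ t) := by
      refine ContinuousOn.div (ContinuousOn.mul ?_ (hcont_da.mono hIcc_sub))
        (hS1.continuousOn.mono hIcc_sub) (fun x hx => hSne x (hIcc_sub hx))
      exact (continuous_pow 2).continuousOn
    have hg_mono : MonotoneOn (fun r => r ^ 2 * deriv a r / S r) (Icc r₀ t) := by
      refine monotoneOn_of_deriv_nonneg (convex_Icc _ _) hg_cont ?_ ?_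
      · rw [interior_Icc]
        intro x hx
        exact ((hg' x (hIoo_sub hx)).differentiableAt).differentiableWithinAt
      · rw [interior_Icc]
        intro x hx
        rw [(hg' x (hIoo_sub hx)).deriv]
        have hμx := hμ x (hIcc_sub ⟨hx.1.le, hx.2.le⟩)
        have hSx := hS x (hIcc_sub ⟨hx.1.le, hx.2.le⟩)
        have hax := ha_nonneg x ⟨hx.1.le, hx.2.le⟩
        have hw2 : (0:ℝ) ≤ w x ^ 2 := sq_nonneg _
        positivity
    have h1 : r₀ ^ 2 * deriv a r₀ / S r₀ ≤ t ^ 2 * deriv a t / S t :=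
      hg_mono (left_mem_Icc.mpr ht_pos.le) (right_mem_Icc.mpr ht_pos.le) ht_pos.le
    have hSr₀ := hS r₀ hr₀I
    have hSt := hS t htI
    have hpos : 0 < r₀ ^ 2 * deriv a r₀ / S r₀ := by positivity
    have hneg : t ^ 2 * deriv a t / S t ≤ 0 := by
      apply div_nonpos_of_nonpos_of_nonneg _ hSt.le
      exact mul_nonpos_of_nonneg_of_nonpos (sq_nonneg t) htB
    linarith
  refine ⟨key, ?_⟩
  refine strictMonoOn_of_deriv_pos (convex_Ico _ _) ha2.continuousOn ?_
  rw [interior_Ico]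
  intro x hx
  exact key x (Ioo_subset_Ico_self hx)

end
end

section
/- Fix ℓ > 0, r_h > 0 and δ > 0. Suppose (m, S, α, ω) is a solution of the EYM field equations on (r_h, r_h + δ) with μ(r) > 0 and S(r) > 0 for all r ∈ (r_h, r_h + δ), and suppose m, S extend to C¹ functions on [r_h, r_h + δ) and α, ω extend to C² functions on [r_h, r_h + δ), with μ(r_h) = 0, S(r_h) > 0 and ω(r_h) ≠ 0. Then α(r_h) = 0; i.e. the electric gauge field function must vanish at a regular event horizon. -/
noncomputable section

open Set Filter

/-- **The electric gauge field function vanishes at a regular event horizon.**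
If `(m, S, α, ω)` solves the EYM field equations on `(r_h, r_h + δ)` with `μ > 0` and
`S > 0` there, and `m, S` extend `C¹`-ly and `α, ω` extend `C²`-ly to `[r_h, r_h + δ)`
with `μ(r_h) = 0`, `S(r_h) > 0` and `ω(r_h) ≠ 0`, then `α(r_h) = 0`. -/
theorem eym_electric_vanishes_at_horizon (ℓ rh δ : ℝ) (hℓ : 0 < ℓ) (hrh : 0 < rh)
    (hδ : 0 < δ) (m S a w : ℝ → ℝ)
    (hsol : IsEYMSolution ℓ (Set.Ioo rh (rh + δ)) m S a w)
    (hμpos : ∀ r ∈ Set.Ioo rh (rh + δ), 0 < metricMu ℓ m r)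
    (hSpos : ∀ r ∈ Set.Ioo rh (rh + δ), 0 < S r)
    (hm : ContDiffOn ℝ 1 m (Set.Ico rh (rh + δ)))
    (hS : ContDiffOn ℝ 1 S (Set.Ico rh (rh + δ)))
    (ha : ContDiffOn ℝ 2 a (Set.Ico rh (rh + δ)))
    (hw : ContDiffOn ℝ 2 w (Set.Ico rh (rh + δ)))
    (hμh : metricMu ℓ m rh = 0) (hSh : 0 < S rh) (hwh : w rh ≠ 0) :
    a rh = 0 := by
  by_contra hane
  have hrhδ : rh < rh + δ := by linarith
  set I := Set.Ioo rh (rh + δ) with hIdef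
  set l := nhdsWithin rh I with hldef
  have hrh_mem : rh ∈ Set.Ico rh (rh + δ) := ⟨le_refl _, hrhδ⟩
  have hne : l.NeBot := by
    rw [hldef, ← mem_closure_iff_nhdsWithin_neBot, hIdef, closure_Ioo hrhδ.ne]
    exact ⟨le_refl _, hrhδ.le⟩
  have hII : I ⊆ Set.Ico rh (rh + δ) := Set.Ioo_subset_Ico_self
  have hlle : l ≤ nhdsWithin rh (Set.Ico rh (rh + δ)) := nhdsWithin_mono _ hII
  -- basic limits
  have hid : Filter.Tendsto (fun r : ℝ => r) l (nhds rh) :=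
    (continuous_id.tendsto rh).mono_left nhdsWithin_le_nhds
  have hmT : Filter.Tendsto m l (nhds (m rh)) :=
    ((hm.continuousOn rh hrh_mem).mono hII).tendsto
  have hST : Filter.Tendsto S l (nhds (S rh)) :=
    ((hS.continuousOn rh hrh_mem).mono hII).tendsto
  have haT : Filter.Tendsto a l (nhds (a rh)) :=
    ((ha.continuousOn rh hrh_mem).mono hII).tendsto
  have hwT : Filter.Tendsto w l (nhds (w rh)) :=
    ((hw.continuousOn rh hrh_mem).mono hII).tendsto
  have hμT : Filter.Tendsto (metricMu ℓ m) l (nhds 0) := by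
    have : Filter.Tendsto (fun r => 1 - 2 * m r / r + r ^ 2 / ℓ ^ 2) l
        (nhds (1 - 2 * m rh / rh + rh ^ 2 / ℓ ^ 2)) := by
      exact (tendsto_const_nhds.sub
        (((tendsto_const_nhds.mul hmT)).div hid hrh.ne')).add
        ((hid.pow 2).div tendsto_const_nhds (by positivity))
    have h0 : 1 - 2 * m rh / rh + rh ^ 2 / ℓ ^ 2 = 0 := hμh
    rw [h0] at this
    exact this
  -- deriv S tends to a finite limit
  have hUD : UniqueDiffOn ℝ (Set.Ico rh (rh + δ)) := uniqueDiffOn_Ico rh (rh + δ)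
  have hdScont : ContinuousOn (derivWithin S (Set.Ico rh (rh + δ)))
      (Set.Ico rh (rh + δ)) := hS.continuousOn_derivWithin hUD (le_refl _)
  have hdST : Filter.Tendsto (deriv S) l
      (nhds (derivWithin S (Set.Ico rh (rh + δ)) rh)) := by
    refine Filter.Tendsto.congr' ?_ (((hdScont rh hrh_mem).mono hII).tendsto)
    filter_upwards [self_mem_nhdsWithin] with r hr
    exact derivWithin_of_mem_nhds
      (Filter.mem_of_superset (isOpen_Ioo.mem_nhds hr) hII)
  -- the lower bound function tends to atTop
  have hNum : Filter.Tendsto (fun r => 2 * a r ^ 2 * w r ^ 2) l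
      (nhds (2 * a rh ^ 2 * w rh ^ 2)) :=
    (tendsto_const_nhds.mul (haT.pow 2)).mul (hwT.pow 2)
  have hNumPos : 0 < 2 * a rh ^ 2 * w rh ^ 2 := by positivity
  have hDen : Filter.Tendsto (fun r => r * metricMu ℓ m r ^ 2 * S r) l
      (nhdsWithin (0:ℝ) (Set.Ioi 0)) := by
    rw [tendsto_nhdsWithin_iff]
    constructor
    · have : Filter.Tendsto (fun r => r * metricMu ℓ m r ^ 2 * S r) l
          (nhds (rh * (0:ℝ) ^ 2 * S rh)) := (hid.mul (hμT.pow 2)).mul hST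
      simpa using this
    · filter_upwards [self_mem_nhdsWithin] with r hr
      have hr0 : 0 < r := lt_trans hrh hr.1
      have h1 := hμpos r hr
      have h2 := hSpos r hr
      exact Set.mem_Ioi.mpr (by positivity)
  have hBlow : Filter.Tendsto
      (fun r => 2 * a r ^ 2 * w r ^ 2 * (r * metricMu ℓ m r ^ 2 * S r)⁻¹) l
      Filter.atTop :=
    Filter.Tendsto.pos_mul_atTop hNumPos hNum (tendsto_inv_nhdsGT_zero.comp hDen)
  -- deriv S dominates the blow-up
  have hge : ∀ᶠ r in l,
      2 * a r ^ 2 * w r ^ 2 * (r * metricMu ℓ m r ^ 2 * S r)⁻¹ ≤ deriv S r := by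
    filter_upwards [self_mem_nhdsWithin] with r hr
    have hr0 : 0 < r := lt_trans hrh hr.1
    have hμ0 : 0 < metricMu ℓ m r := hμpos r hr
    have hS0 : 0 < S r := hSpos r hr
    rw [hsol.eq_S r hr]
    have h1 : 2 * a r ^ 2 * w r ^ 2 * (r * metricMu ℓ m r ^ 2 * S r)⁻¹ =
        S r * (2 * a r ^ 2 * w r ^ 2 / (r * metricMu ℓ m r ^ 2 * S r ^ 2)) := by
      field_simp
    rw [h1, mul_add]
    have h2 : 0 ≤ S r * (2 * (deriv w r) ^ 2 / r) := by positivity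
    linarith
  have : Filter.Tendsto (deriv S) l Filter.atTop := tendsto_atTop_mono' l hge hBlow
  exact not_tendsto_nhds_of_tendsto_atTop this _ hdST
end
end

section
/- Fix ℓ > 0, r_h > 0 and δ > 0. Suppose (m, S, α, ω) is a solution of the EYM field equations on (r_h, r_h + δ) with μ(r) > 0 and S(r) > 0 there, such that m, S, α, ω extend to C¹ functions on [r_h, r_h + δ) with μ(r_h) = 0, μ'(r_h) ≠ 0, S(r_h) = S_h > 0, α(r_h) = 0, α'(r_h) = α'_h and ω(r_h) = ω_h. Then m(r_h) = r_h/2 + r_h³/(2ℓ²), m'(r_h) = r_h²α'_h²/(2S_h²) + (ω_h² − 1)²/(2r_h²), and μ'(r_h) = (1/r_h)(1 + 3 r_h²/ℓ²) − r_h α'_h²/S_h² − (ω_h² − 1)²/r_h³. -/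
noncomputable section

open Set Filter

/-- **Horizon data formulae.**
If `(m, S, α, ω)` solves the EYM field equations on `(r_h, r_h + δ)` with `μ, S > 0`
there, and `m, S, α, ω` extend `C¹`-ly to `[r_h, r_h + δ)` with `μ(r_h) = 0`,
`μ'(r_h) ≠ 0`, `S(r_h) = S_h > 0`, `α(r_h) = 0`, `α'(r_h) = α'_h`, `ω(r_h) = ω_h`, then
`m(r_h) = r_h/2 + r_h³/(2ℓ²)`,
`m'(r_h) = r_h²α'_h²/(2S_h²) + (ω_h² − 1)²/(2r_h²)` and
`μ'(r_h) = (1/r_h)(1 + 3r_h²/ℓ²) − r_h α'_h²/S_h² − (ω_h² − 1)²/r_h³`. -/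
theorem eym_horizon_data_formulae (ℓ rh δ Sh ah' wh : ℝ) (hℓ : 0 < ℓ) (hrh : 0 < rh)
    (hδ : 0 < δ) (m S a w : ℝ → ℝ)
    (hsol : IsEYMSolution ℓ (Set.Ioo rh (rh + δ)) m S a w)
    (hμpos : ∀ r ∈ Set.Ioo rh (rh + δ), 0 < metricMu ℓ m r)
    (hSpos : ∀ r ∈ Set.Ioo rh (rh + δ), 0 < S r)
    (hm : ContDiffOn ℝ 1 m (Set.Ico rh (rh + δ)))
    (hS : ContDiffOn ℝ 1 S (Set.Ico rh (rh + δ)))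
    (ha : ContDiffOn ℝ 1 a (Set.Ico rh (rh + δ)))
    (hw : ContDiffOn ℝ 1 w (Set.Ico rh (rh + δ)))
    (hμh : metricMu ℓ m rh = 0)
    (hμ'h : derivWithin (metricMu ℓ m) (Set.Ico rh (rh + δ)) rh ≠ 0)
    (hSh : S rh = Sh) (hShpos : 0 < Sh)
    (hah : a rh = 0) (hah' : derivWithin a (Set.Ico rh (rh + δ)) rh = ah')
    (hwh : w rh = wh) :
    m rh = rh / 2 + rh ^ 3 / (2 * ℓ ^ 2) ∧
    derivWithin m (Set.Ico rh (rh + δ)) rh =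
      rh ^ 2 * ah' ^ 2 / (2 * Sh ^ 2) + (wh ^ 2 - 1) ^ 2 / (2 * rh ^ 2) ∧
    derivWithin (metricMu ℓ m) (Set.Ico rh (rh + δ)) rh =
      (1 / rh) * (1 + 3 * rh ^ 2 / ℓ ^ 2) - rh * ah' ^ 2 / Sh ^ 2
        - (wh ^ 2 - 1) ^ 2 / rh ^ 3 := by
  have hrne : rh ≠ 0 := ne_of_gt hrh
  have hℓne : ℓ ≠ 0 := ne_of_gt hℓ
  have hrb : rh < rh + δ := by linarith
  set J := Set.Ico rh (rh + δ) with hJdef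
  set I := Set.Ioo rh (rh + δ) with hIdef
  have hrhJ : rh ∈ J := ⟨le_refl rh, hrb⟩
  have hIJ : I ⊆ J := Set.Ioo_subset_Ico_self
  have hud : UniqueDiffOn ℝ J := uniqueDiffOn_Ico rh (rh + δ)
  have hJr : ∀ r ∈ J, r ≠ 0 := fun r hr => ne_of_gt (lt_of_lt_of_le hrh hr.1)
  -- Claim 1
  have hmrh : m rh = rh / 2 + rh ^ 3 / (2 * ℓ ^ 2) := by
    have h0 : 1 - 2 * m rh / rh + rh ^ 2 / ℓ ^ 2 = 0 := hμh
    field_simp at h0 ⊢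
    nlinarith [h0]
  -- filters
  haveI hneI : (nhdsWithin rh I).NeBot := by
    have : rh ∈ closure I := by
      rw [hIdef, closure_Ioo (ne_of_lt hrb)]; exact ⟨le_refl rh, le_of_lt hrb⟩
    exact mem_closure_iff_nhdsWithin_neBot.mp this
  have hJmemnhds : ∀ r ∈ I, J ∈ nhds r := fun r hr =>
    mem_nhds_iff.2 ⟨I, hIJ, isOpen_Ioo, hr⟩
  have hIle : nhdsWithin rh I ≤ nhdsWithin rh J := nhdsWithin_mono rh hIJ
  have hIleD : nhdsWithin rh I ≤ nhdsWithin rh (J \ {rh}) := by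
    apply nhdsWithin_mono
    intro r hr
    exact ⟨hIJ hr, by simp [Set.mem_singleton_iff]; exact ne_of_gt hr.1⟩
  -- basic tendsto facts
  have tid : Tendsto (fun r : ℝ => r) (nhdsWithin rh I) (nhds rh) :=
    tendsto_id.mono_left nhdsWithin_le_nhds
  have tS : Tendsto S (nhdsWithin rh I) (nhds Sh) := by
    have := ((hS.continuousOn) rh hrhJ).mono_left hIle
    rwa [hSh] at this
  have tw : Tendsto w (nhdsWithin rh I) (nhds wh) := by
    have := ((hw.continuousOn) rh hrhJ).mono_left hIle
    rwa [hwh] at this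
  have hμcont : ContinuousOn (metricMu ℓ m) J := by
    have : ContinuousOn (fun r => 1 - 2 * m r / r + r ^ 2 / ℓ ^ 2) J := by
      apply ContinuousOn.add
      · exact continuousOn_const.sub
          (((continuousOn_const.mul hm.continuousOn).div continuousOn_id) hJr)
      · exact (continuousOn_pow 2).div_const _
    exact this
  have tμ : Tendsto (metricMu ℓ m) (nhdsWithin rh I) (nhds 0) := by
    have := (hμcont rh hrhJ).mono_left hIle
    rwa [hμh] at this
  -- derivatives within J at rh
  set m'h := derivWithin m J rh with hm'def
  have hmD : HasDerivWithinAt m m'h J rh :=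
    ((hm.differentiableOn one_ne_zero) rh hrhJ).hasDerivWithinAt
  have haD : HasDerivWithinAt a ah' J rh := by
    have := ((ha.differentiableOn one_ne_zero) rh hrhJ).hasDerivWithinAt
    rwa [hah'] at this
  set w'h := derivWithin w J rh with hw'def
  have hwD : HasDerivWithinAt w w'h J rh :=
    ((hw.differentiableOn one_ne_zero) rh hrhJ).hasDerivWithinAt
  have hμD : HasDerivWithinAt (metricMu ℓ m)
      (-((2 * m'h * rh - 2 * m rh * 1) / rh ^ 2) + 2 * rh / ℓ ^ 2) J rh := by
    have h1 : HasDerivWithinAt (fun r => 2 * m r) (2 * m'h) J rh := hmD.const_mul 2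
    have h2 : HasDerivWithinAt (fun r : ℝ => r) 1 J rh := hasDerivWithinAt_id rh J
    have h3 := h1.div h2 hrne
    have h4 : HasDerivWithinAt (fun r : ℝ => r ^ 2 / ℓ ^ 2) (2 * rh / ℓ ^ 2) J rh := by
      have h5 := (hasDerivWithinAt_pow 2 rh (s := J)).div_const (ℓ ^ 2)
      exact h5.congr_deriv (by push_cast; ring)
    have h6 := ((hasDerivWithinAt_const rh J (1 : ℝ)).sub h3).add h4
    have hfun : metricMu ℓ m = fun r => 1 - 2 * m r / r + r ^ 2 / ℓ ^ 2 := rfl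
    rw [hfun]
    exact h6.congr_deriv (by ring)
  set μ'h := derivWithin (metricMu ℓ m) J rh with hμ'def
  have hμ'eq : μ'h = -((2 * m'h * rh - 2 * m rh * 1) / rh ^ 2) + 2 * rh / ℓ ^ 2 :=
    hμD.derivWithin (hud rh hrhJ)
  have hμD' : HasDerivWithinAt (metricMu ℓ m) μ'h J rh := by rw [hμ'eq]; exact hμD
  -- slopes
  have tslope_a : Tendsto (slope a rh) (nhdsWithin rh I) (nhds ah') :=
    (hasDerivWithinAt_iff_tendsto_slope.mp haD).mono_left hIleD
  have tslope_μ : Tendsto (slope (metricMu ℓ m) rh) (nhdsWithin rh I) (nhds μ'h) :=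
    (hasDerivWithinAt_iff_tendsto_slope.mp hμD').mono_left hIleD
  -- continuity of derivWithin
  have tA : Tendsto (derivWithin a J) (nhdsWithin rh I) (nhds ah') := by
    have := ((ha.continuousOn_derivWithin hud le_rfl) rh hrhJ).mono_left hIle
    rwa [hah'] at this
  have tW : Tendsto (derivWithin w J) (nhdsWithin rh I) (nhds w'h) :=
    ((hw.continuousOn_derivWithin hud le_rfl) rh hrhJ).mono_left hIle
  have tm' : Tendsto (derivWithin m J) (nhdsWithin rh I) (nhds m'h) :=
    ((hm.continuousOn_derivWithin hud le_rfl) rh hrhJ).mono_left hIle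
  -- the limit of the RHS decomposition
  have hSh2 : (2 : ℝ) * Sh ^ 2 ≠ 0 := by positivity
  have t1 : Tendsto (fun r => r ^ 2 * (derivWithin a J r) ^ 2 / (2 * S r ^ 2))
      (nhdsWithin rh I) (nhds (rh ^ 2 * ah' ^ 2 / (2 * Sh ^ 2))) :=
    ((tid.pow 2).mul (tA.pow 2)).div (tendsto_const_nhds.mul (tS.pow 2)) hSh2
  have hden : μ'h * Sh ^ 2 ≠ 0 := mul_ne_zero hμ'h (by positivity)
  have t2 : Tendsto (fun r => (slope a rh r) ^ 2 * w r ^ 2 * (r - rh) /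
      (slope (metricMu ℓ m) rh r * S r ^ 2)) (nhdsWithin rh I) (nhds 0) := by
    have hnum : Tendsto (fun r => (slope a rh r) ^ 2 * w r ^ 2 * (r - rh))
        (nhdsWithin rh I) (nhds (ah' ^ 2 * wh ^ 2 * (rh - rh))) :=
      ((tslope_a.pow 2).mul (tw.pow 2)).mul (tid.sub tendsto_const_nhds)
    have := hnum.div (tslope_μ.mul (tS.pow 2)) hden
    simpa [Pi.div_def] using this
  have t3 : Tendsto (fun r => metricMu ℓ m r * (derivWithin w J r) ^ 2)
      (nhdsWithin rh I) (nhds 0) := by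
    have := tμ.mul (tW.pow 2)
    simpa using this
  have hrh2 : (2 : ℝ) * rh ^ 2 ≠ 0 := by positivity
  have t4 : Tendsto (fun r => (w r ^ 2 - 1) ^ 2 / (2 * r ^ 2))
      (nhdsWithin rh I) (nhds ((wh ^ 2 - 1) ^ 2 / (2 * rh ^ 2))) :=
    (((tw.pow 2).sub tendsto_const_nhds).pow 2).div
      (tendsto_const_nhds.mul (tid.pow 2)) hrh2
  have tG : Tendsto (fun r => r ^ 2 * (derivWithin a J r) ^ 2 / (2 * S r ^ 2)
      + (slope a rh r) ^ 2 * w r ^ 2 * (r - rh) /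
        (slope (metricMu ℓ m) rh r * S r ^ 2)
      + metricMu ℓ m r * (derivWithin w J r) ^ 2
      + (w r ^ 2 - 1) ^ 2 / (2 * r ^ 2)) (nhdsWithin rh I)
      (nhds (rh ^ 2 * ah' ^ 2 / (2 * Sh ^ 2) + (wh ^ 2 - 1) ^ 2 / (2 * rh ^ 2))) := by
    have := ((t1.add t2).add t3).add t4
    simpa using this
  -- deriv m equals the decomposition on I
  have heq : ∀ r ∈ I, derivWithin m J r =
      r ^ 2 * (derivWithin a J r) ^ 2 / (2 * S r ^ 2)
      + (slope a rh r) ^ 2 * w r ^ 2 * (r - rh) /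
        (slope (metricMu ℓ m) rh r * S r ^ 2)
      + metricMu ℓ m r * (derivWithin w J r) ^ 2
      + (w r ^ 2 - 1) ^ 2 / (2 * r ^ 2) := by
    intro r hr
    have hJn := hJmemnhds r hr
    rw [derivWithin_of_mem_nhds hJn, derivWithin_of_mem_nhds hJn,
      derivWithin_of_mem_nhds hJn]
    rw [hsol.eq_m r hr]
    have hrrh : r - rh ≠ 0 := sub_ne_zero.mpr (ne_of_gt hr.1)
    have hμne : metricMu ℓ m r ≠ 0 := hsol.mu_ne_zero r hr
    have hSne : S r ≠ 0 := hsol.S_ne_zero r hr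
    have hr0 : r ≠ 0 := hJr r (hIJ hr)
    rw [slope_def_field, slope_def_field, hah, hμh]
    have hμdiv : (metricMu ℓ m r - 0) / (r - rh) ≠ 0 := by
      rw [sub_zero]; exact div_ne_zero hμne hrrh
    field_simp
    ring
  have hFtend : Tendsto (derivWithin m J) (nhdsWithin rh I)
      (nhds (rh ^ 2 * ah' ^ 2 / (2 * Sh ^ 2) + (wh ^ 2 - 1) ^ 2 / (2 * rh ^ 2))) :=
    tG.congr' (eventually_of_mem self_mem_nhdsWithin fun r hr => (heq r hr).symm)
  have hclaim2 : m'h = rh ^ 2 * ah' ^ 2 / (2 * Sh ^ 2) + (wh ^ 2 - 1) ^ 2 / (2 * rh ^ 2) :=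
    tendsto_nhds_unique tm' hFtend
  refine ⟨hmrh, hclaim2, ?_⟩
  rw [hμ'eq, hclaim2, hmrh]
  have hSh' : Sh ≠ 0 := ne_of_gt hShpos
  field_simp
  ring
end
end
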